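/- Walk Filtering Lemma (laminar form): Set f₃(m)=32m³+1, f₄(m)=32m³+m+1, f₅(m)=f₃(f₄(m))+m+f₄(m), and f₆(m)=f₅(f₅(m)). Let W = (w_1,…,w_n) be a walk on a vertex set V whose repeated occurrences have laminar structure: there are no positions i < a < j < b with w_i = w_j, w_a = w_b, and w_i ≠ w_a. Let L : V → (finite sets of colors) be a proper list assignment of W (i.e., L(w_i) ∩ L(w_{i+1}) = ∅ for all 1 ≤ i < n) with |L(v)| ≥ f₆(m) for every vertex v occurring in W. Then there exists M with M(v) ⊆ L(v) and |M(v)| ≥ m for every vertex v occurring in W, such that for every simple W-block P = (w_i,…,w_j) (a block of W on which the vertices w_i,…,w_j are pairwise distinct) and every coloring c with c(v) ∈ M(v) for all v, the sequence (c(w_i),…,c(w_j)) is non-repetitive. -/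

import Mathlib

/-- `f₃(m) = 32m³ + 1`. -/
def f3 (m : ℕ) : ℕ := 32 * m ^ 3 + 1

/-- `f₄(m) = f₃(m) + m = 32m³ + m + 1`. -/
def f4 (m : ℕ) : ℕ := f3 m + m

/-- `f₅(m) = f₃(f₄(m)) + m + f₄(m)`. -/
def f5 (m : ℕ) : ℕ := f3 (f4 m) + m + f4 m

/-- `f₆(m) = f₅(f₅(m))`. -/
def f6 (m : ℕ) : ℕ := f5 (f5 m)

namespace WFL

open Finset

attribute [local instance] Classical.propDecidable

noncomputable section

variable {V C : Type*}

/-- position `p` is a first occurrence in the walk `w`. -/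
def fresh (w : ℕ → V) (p : ℕ) : Prop := ∀ q, q < p → w q ≠ w p

/-- the first occurrence of the vertex sitting at position `r`. -/
def fo (w : ℕ → V) (r : ℕ) : ℕ := Nat.find (⟨r, rfl⟩ : ∃ q, w q = w r)

lemma fo_le (w : ℕ → V) (r : ℕ) : fo w r ≤ r := Nat.find_le rfl

lemma w_fo (w : ℕ → V) (r : ℕ) : w (fo w r) = w r :=
  Nat.find_spec (⟨r, rfl⟩ : ∃ q, w q = w r)

lemma fresh_fo (w : ℕ → V) (r : ℕ) : fresh w (fo w r) := by
  intro q hq heq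
  exact Nat.find_min (⟨r, rfl⟩ : ∃ q, w q = w r) hq (heq.trans (w_fo w r))

lemma fo_congr (w : ℕ → V) {r r' : ℕ} (h : w r = w r') : fo w r = fo w r' := by
  apply le_antisymm
  · exact Nat.find_min' _ ((w_fo w r').trans h.symm)
  · exact Nat.find_min' _ ((w_fo w r).trans h)

lemma fo_eq_of_fresh (w : ℕ → V) {r : ℕ} (h : fresh w r) : fo w r = r := by
  rcases lt_or_eq_of_le (fo_le w r) with h' | h'
  · exact absurd (w_fo w r) (h _ h')
  · exact h'

/-- Count of `m`-subsets of `X` meeting a fixed set `D`. -/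
lemma count_meet (m : ℕ) (X D : Finset C) :
    ((Finset.powersetCard m X).filter (fun s => (D ∩ s).Nonempty)).card
      ≤ D.card * Nat.choose (X.card - 1) (m - 1) := by
  have hsub : ((Finset.powersetCard m X).filter (fun s => (D ∩ s).Nonempty))
      ⊆ D.biUnion (fun x => (Finset.powersetCard m X).filter (fun s => x ∈ s)) := by
    intro s hs
    rcases mem_filter.mp hs with ⟨hs1, ⟨x, hx⟩⟩
    rcases mem_inter.mp hx with ⟨hxD, hxs⟩
    exact mem_biUnion.mpr ⟨x, hxD, mem_filter.mpr ⟨hs1, hxs⟩⟩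
  refine le_trans (card_le_card hsub) (le_trans Finset.card_biUnion_le ?_)
  have hfib : ∀ x, ((Finset.powersetCard m X).filter (fun s => x ∈ s)).card
      ≤ Nat.choose (X.card - 1) (m - 1) := by
    intro x
    by_cases hxX : x ∈ X
    · have h1 : ((Finset.powersetCard m X).filter (fun s => x ∈ s)).card
          ≤ (Finset.powersetCard (m-1) (X.erase x)).card := by
        apply Finset.card_le_card_of_injOn (fun s => s.erase x)
        · intro s hs
          rcases mem_filter.mp hs with ⟨hsP, hxs⟩
          rcases mem_powersetCard.mp hsP with ⟨hsX, hscard⟩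
          refine mem_powersetCard.mpr ⟨Finset.erase_subset_erase x hsX, ?_⟩
          rw [Finset.card_erase_of_mem hxs, hscard]
        · intro s₁ h₁ s₂ h₂ he
          have hx₁ := (mem_filter.mp (Finset.mem_coe.mp h₁)).2
          have hx₂ := (mem_filter.mp (Finset.mem_coe.mp h₂)).2
          have he' : s₁.erase x = s₂.erase x := he
          rw [← Finset.insert_erase hx₁, he', Finset.insert_erase hx₂]
      rw [Finset.card_powersetCard, Finset.card_erase_of_mem hxX] at h1
      exact h1
    · have : ((Finset.powersetCard m X).filter (fun s => x ∈ s)) = ∅ := by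
        apply Finset.filter_eq_empty_iff.mpr
        intro s hs hxs
        exact hxX ((mem_powersetCard.mp hs).1 hxs)
      rw [this]
      simp
  calc ∑ x ∈ D, ((Finset.powersetCard m X).filter (fun s => x ∈ s)).card
      ≤ ∑ _x ∈ D, Nat.choose (X.card - 1) (m - 1) := Finset.sum_le_sum (fun x _ => hfib x)
    _ = D.card * Nat.choose (X.card - 1) (m - 1) := by rw [Finset.sum_const, smul_eq_mul]

lemma four_B_le_A {m F : ℕ} (hm : 1 ≤ m) (hF : 4 * m^2 ≤ F) :
    4 * (m * Nat.choose (F-1) (m-1)) ≤ Nat.choose F m := by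
  have hmF : m ≤ F := by nlinarith
  have hF1 : 1 ≤ F := le_trans hm hmF
  have hid : F * Nat.choose (F-1) (m-1) = Nat.choose F m * m := by
    have h := Nat.add_one_mul_choose_eq (F-1) (m-1)
    rw [show F - 1 + 1 = F by omega, show m - 1 + 1 = m by omega] at h
    exact h
  have hX : 0 < Nat.choose (F-1) (m-1) := Nat.choose_pos (by omega)
  have key : m * (4 * (m * Nat.choose (F-1) (m-1))) ≤ m * Nat.choose F m := by
    calc m * (4 * (m * Nat.choose (F-1) (m-1)))
        = (4 * m^2) * Nat.choose (F-1) (m-1) := by ring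
      _ ≤ F * Nat.choose (F-1) (m-1) := Nat.mul_le_mul_right _ hF
      _ = Nat.choose F m * m := hid
      _ = m * Nat.choose F m := by ring
  exact Nat.le_of_mul_le_mul_left key (by omega)

lemma half_geo_sum (p : ℕ) : ∑ l ∈ Finset.Icc 1 p, ((1:ℚ)/2)^(l-1) ≤ 2 := by
  have key : ∀ t : ℕ, ∑ l ∈ Finset.Icc 1 t, ((1:ℚ)/2)^(l-1) = 2 - 2 * ((1:ℚ)/2)^t := by
    intro t
    induction t with
    | zero => norm_num
    | succ t IH =>
        rw [Finset.sum_Icc_succ_top (by omega) (fun l => ((1:ℚ)/2)^(l-1)), IH]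
        rw [show t + 1 - 1 = t by omega]
        rw [pow_succ]
        ring
  rw [key p]
  have : (0:ℚ) ≤ 2 * ((1:ℚ)/2)^p := by positivity
  linarith

section Pass

variable (w : ℕ → V) (n m F : ℕ) (K : V → Finset C)

/-- a sized-down version of the lists. -/
def Kd (v : V) : Finset C :=
  if h : F ≤ (K v).card then (Finset.exists_subset_card_eq (s := K v) (n := F) h).choose else ∅

lemma Kd_subset (v : V) : Kd F K v ⊆ K v := by
  rw [Kd]
  split
  · exact (Finset.exists_subset_card_eq ‹_›).choose_spec.1
  · exact empty_subset _

lemma Kd_card (v : V) (h : F ≤ (K v).card) : (Kd F K v).card = F := by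
  rw [Kd, dif_pos h]
  exact (Finset.exists_subset_card_eq h).choose_spec.2

/-- eligible `m`-subsets for the vertex `v`. -/
def msets (v : V) : Finset (Finset C) := Finset.powersetCard m (Kd F K v)

lemma msets_card (v : V) (h : F ≤ (K v).card) :
    (msets m F K v).card = Nat.choose F m := by
  rw [msets, Finset.card_powersetCard, Kd_card F K v h]

/-- the repetition pattern `(a, l)` is broken by the state `g`. -/
def breaks (g : ℕ → Finset C) (a l : ℕ) : Prop :=
  ∃ k, k < l ∧ g (fo w (a + k)) ∩ g (fo w (a + l + k)) = ∅

/-- the repetition pattern `(a, l)` is due at stage `p`: it ends at `p`, its block is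
vertex-distinct, and its second half consists of first occurrences. -/
def Due (p a l : ℕ) : Prop :=
  1 ≤ l ∧ a + 2 * l = p + 1 ∧
    (∀ r s, a ≤ r → r < s → s < a + 2 * l → w r ≠ w s) ∧
    (∀ r, a + l ≤ r → r < a + 2 * l → fresh w r)

def Ok (p : ℕ) (g : ℕ → Finset C) : Prop := ∀ a l, Due w p a l → breaks w g a l

def Sstep (p : ℕ) (Sp : Finset (ℕ → Finset C)) : Finset (ℕ → Finset C) :=
  if p < n ∧ fresh w p then
    Sp.biUnion (fun g =>
      ((msets m F K (w p)).filter (fun s => Ok w p (Function.update g p s))).image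
        (fun s => Function.update g p s))
  else Sp

/-- the set of good partial states. -/
def S : ℕ → Finset (ℕ → Finset C) :=
  fun p => Nat.rec {fun _ => (∅ : Finset C)} (fun p Sp => Sstep w n m F K p Sp) p

lemma S_zero : S w n m F K 0 = {fun _ => (∅ : Finset C)} := rfl

lemma S_succ (p : ℕ) : S w n m F K (p+1) = Sstep w n m F K p (S w n m F K p) := rfl

lemma S_mem_spec : ∀ p, ∀ g ∈ S w n m F K p,
    (∀ q, q < p → q < n → fresh w q → g q ∈ msets m F K (w q)) ∧
    (∀ q, ¬(q < p ∧ q < n ∧ fresh w q) → g q = ∅) := by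
  intro p
  induction p with
  | zero =>
      intro g hg
      rw [S_zero, mem_singleton] at hg
      subst hg
      exact ⟨fun q hq _ _ => absurd hq (Nat.not_lt_zero q), fun _ _ => rfl⟩
  | succ p IH =>
      intro g hg
      rw [S_succ, Sstep] at hg
      by_cases hc : p < n ∧ fresh w p
      · rw [if_pos hc] at hg
        rcases mem_biUnion.mp hg with ⟨g₀, hg₀, hgi⟩
        rcases mem_image.mp hgi with ⟨s, hs, rfl⟩
        have hs' := (mem_filter.mp hs).1
        constructor
        · intro q hq hqn hqf
          rcases eq_or_ne q p with rfl | hne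
          · rw [Function.update_self]
            exact hs'
          · rw [Function.update_of_ne hne]
            exact (IH g₀ hg₀).1 q (by omega) hqn hqf
        · intro q hq
          rcases eq_or_ne q p with rfl | hne
          · exact absurd ⟨Nat.lt_succ_self q, hc.1, hc.2⟩ hq
          · rw [Function.update_of_ne hne]
            exact (IH g₀ hg₀).2 q
              (fun h => hq ⟨Nat.lt_succ_of_lt h.1, h.2.1, h.2.2⟩)
      · rw [if_neg hc] at hg
        constructor
        · intro q hq hqn hqf
          rcases eq_or_ne q p with rfl | hne
          · exact absurd ⟨hqn, hqf⟩ hc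
          · exact (IH g hg).1 q (by omega) hqn hqf
        · intro q hq
          exact (IH g hg).2 q (fun h => hq ⟨Nat.lt_succ_of_lt h.1, h.2.1, h.2.2⟩)

lemma update_inj_S {p : ℕ} {g₁ g₂ : ℕ → Finset C} (h₁ : g₁ ∈ S w n m F K p)
    (h₂ : g₂ ∈ S w n m F K p) {s₁ s₂ : Finset C}
    (he : Function.update g₁ p s₁ = Function.update g₂ p s₂) : g₁ = g₂ ∧ s₁ = s₂ := by
  constructor
  · funext q
    rcases eq_or_ne q p with rfl | hne
    · rw [(S_mem_spec w n m F K q g₁ h₁).2 q (by omega),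
        (S_mem_spec w n m F K q g₂ h₂).2 q (by omega)]
    · have := congrFun he q
      rwa [Function.update_of_ne hne, Function.update_of_ne hne] at this
  · have := congrFun he p
    rwa [Function.update_self, Function.update_self] at this

/-- the peeling lemma: states satisfying `j` stacked "meet" constraints on the topmost
`j` coordinates are few. -/
lemma peel (hK : ∀ i, i < n → F ≤ (K (w i)).card) :
    ∀ j p, j ≤ p →
      (∀ q, p - j ≤ q → q < p → q < n ∧ fresh w q) →
      ∀ pt : ℕ → ℕ, (∀ k, k < j → pt k < p - j ∧ pt k < n ∧ fresh w (pt k)) →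
      ((S w n m F K p).filter
        (fun g => ∀ k, k < j → (g (pt k) ∩ g (p - j + k)).Nonempty)).card ≤
        (m * Nat.choose (F-1) (m-1))^j * (S w n m F K (p-j)).card := by
  intro j
  induction j with
  | zero =>
      intro p _ _ pt _
      simp only [pow_zero, one_mul, Nat.sub_zero]
      exact card_le_card (filter_subset _ _)
  | succ j IHj =>
      intro p hjp hfr pt hpt
      obtain ⟨p', rfl⟩ : ∃ p', p = p' + 1 := ⟨p - 1, by omega⟩
      have hp' : p' < n ∧ fresh w p' := hfr p' (by omega) (by omega)
      have hform : S w n m F K (p'+1) = (S w n m F K p').biUnion (fun g =>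
          ((msets m F K (w p')).filter (fun s => Ok w p' (Function.update g p' s))).image
            (fun s => Function.update g p' s)) := by
        rw [S_succ, Sstep, if_pos hp']
      set B := m * Nat.choose (F-1) (m-1) with hB
      set T2 := (S w n m F K p').filter
        (fun g => ∀ k, k < j → (g (pt k) ∩ g (p' - j + k)).Nonempty) with hT2
      have hsub : (S w n m F K (p'+1)).filter
          (fun g => ∀ k, k < j + 1 → (g (pt k) ∩ g (p' + 1 - (j+1) + k)).Nonempty)
          ⊆ T2.biUnion (fun g =>
            (((msets m F K (w p')).filter (fun s => (g (pt j) ∩ s).Nonempty)).image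
              (fun s => Function.update g p' s))) := by
        intro x hx
        rcases mem_filter.mp hx with ⟨hxS, hcond⟩
        rw [hform] at hxS
        rcases mem_biUnion.mp hxS with ⟨g, hgS, himg⟩
        rcases mem_image.mp himg with ⟨s, hsfil, rfl⟩
        have hsm := (mem_filter.mp hsfil).1
        have hgT2 : g ∈ T2 := by
          rw [hT2, mem_filter]
          refine ⟨hgS, fun k hk => ?_⟩
          have h := hcond k (by omega)
          rwa [Function.update_of_ne (by have := (hpt k (by omega)).1; omega),
            show p' + 1 - (j+1) + k = p' - j + k by omega,
            Function.update_of_ne (by omega)] at h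
        refine mem_biUnion.mpr ⟨g, hgT2, mem_image.mpr ⟨s, ?_, rfl⟩⟩
        refine mem_filter.mpr ⟨hsm, ?_⟩
        have h := hcond j (by omega)
        rwa [Function.update_of_ne (by have := (hpt j (by omega)).1; omega),
          show p' + 1 - (j+1) + j = p' by omega,
          Function.update_self] at h
      refine le_trans (card_le_card hsub) (le_trans Finset.card_biUnion_le ?_)
      have hper : ∀ g ∈ T2,
          (((msets m F K (w p')).filter (fun s => (g (pt j) ∩ s).Nonempty)).image
            (fun s => Function.update g p' s)).card ≤ B := by
        intro g hg
        refine le_trans Finset.card_image_le ?_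
        have hptj := hpt j (by omega)
        have hD : g (pt j) ∈ msets m F K (w (pt j)) := by
          have hgS := (mem_filter.mp hg).1
          exact (S_mem_spec w n m F K p' g hgS).1 (pt j) (by omega) hptj.2.1 hptj.2.2
        have hDcard : (g (pt j)).card = m := (mem_powersetCard.mp hD).2
        have := count_meet m (Kd F K (w p')) (g (pt j))
        rw [Kd_card F K (w p') (hK p' hp'.1), hDcard] at this
        exact this
      calc ∑ g ∈ T2, (((msets m F K (w p')).filter
              (fun s => (g (pt j) ∩ s).Nonempty)).image (fun s => Function.update g p' s)).card
          ≤ ∑ _g ∈ T2, B := Finset.sum_le_sum hper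
        _ = T2.card * B := by rw [Finset.sum_const, smul_eq_mul]
        _ ≤ (B^j * (S w n m F K (p' - j)).card) * B := by
            apply Nat.mul_le_mul_right
            refine IHj p' (by omega) (fun q hq1 hq2 => hfr q (by omega) (by omega)) pt
              (fun k hk => ?_)
            have := hpt k (by omega)
            exact ⟨by omega, this.2.1, this.2.2⟩
        _ = B^(j+1) * (S w n m F K (p' + 1 - (j+1))).card := by
            rw [show p' + 1 - (j + 1) = p' - j by omega]
            ring

lemma growth (hm : 1 ≤ m) (hF : 4 * m^2 ≤ F)
    (hK : ∀ i, i < n → F ≤ (K (w i)).card) :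
    ∀ p, p < n → fresh w p →
      Nat.choose F m * (S w n m F K p).card ≤ 2 * (S w n m F K (p+1)).card := by
  intro p
  induction p using Nat.strong_induction_on with
  | _ p IH =>
  intro hpn hfp
  set A := Nat.choose F m with hA
  set B := m * Nat.choose (F-1) (m-1) with hB
  have hBA : 4 * B ≤ A := four_B_le_A hm hF
  have hmF : m ≤ F := by nlinarith
  have hBpos : 0 < B := Nat.mul_pos hm (Nat.choose_pos (by omega))
  have hApos : 0 < A := Nat.choose_pos hmF
  -- the chain bound
  have chain : ∀ d, d ≤ p → (∀ q, p - d ≤ q → q < p → fresh w q) →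
      A^d * (S w n m F K (p-d)).card ≤ 2^d * (S w n m F K p).card := by
    intro d
    induction d with
    | zero => intro _ _; simp
    | succ d IHd =>
        intro hdp hfr
        have h1 : A * (S w n m F K (p-(d+1))).card ≤ 2 * (S w n m F K (p-d)).card := by
          have hq : p - (d+1) < p := by omega
          have hfq : fresh w (p-(d+1)) := hfr _ (le_refl _) hq
          have h := IH (p-(d+1)) hq (by omega) hfq
          rwa [show p-(d+1)+1 = p-d by omega] at h
        have h2 : A^d * (S w n m F K (p-d)).card ≤ 2^d * (S w n m F K p).card :=
          IHd (by omega) (fun q hq1 hq2 => hfr q (by omega) hq2)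
        calc A^(d+1) * (S w n m F K (p-(d+1))).card
            = A^d * (A * (S w n m F K (p-(d+1))).card) := by ring
          _ ≤ A^d * (2 * (S w n m F K (p-d)).card) := Nat.mul_le_mul_left _ h1
          _ = 2 * (A^d * (S w n m F K (p-d)).card) := by ring
          _ ≤ 2 * (2^d * (S w n m F K p).card) := Nat.mul_le_mul_left _ h2
          _ = 2^(d+1) * (S w n m F K p).card := by ring
  have hc : p < n ∧ fresh w p := ⟨hpn, hfp⟩
  -- card of S (p+1) as a sum
  have h1 : (S w n m F K (p+1)).card = ∑ g ∈ S w n m F K p,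
      ((msets m F K (w p)).filter (fun s => Ok w p (Function.update g p s))).card := by
    rw [S_succ, Sstep, if_pos hc]
    rw [Finset.card_biUnion ?disj]
    · refine Finset.sum_congr rfl (fun g hg => ?_)
      apply Finset.card_image_of_injOn
      intro s₁ h₁ s₂ h₂ he
      exact (update_inj_S w n m F K hg hg he).2
    case disj =>
      intro g₁ h₁ g₂ h₂ hne
      rw [Function.onFun, Finset.disjoint_left]
      intro x hx1 hx2
      rcases mem_image.mp hx1 with ⟨s₁, hs₁, rfl⟩
      rcases mem_image.mp hx2 with ⟨s₂, hs₂, heq⟩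
      exact hne (update_inj_S w n m F K h₁ h₂ heq.symm).1
  -- good + bad = A
  have h2 : ∀ g ∈ S w n m F K p,
      ((msets m F K (w p)).filter (fun s => Ok w p (Function.update g p s))).card
      + ((msets m F K (w p)).filter (fun s => ¬ Ok w p (Function.update g p s))).card = A := by
    intro g _
    rw [Finset.card_filter_add_card_filter_not, msets_card m F K (w p) (hK p hpn)]
  have h3 : A * (S w n m F K p).card = (S w n m F K (p+1)).card
      + ∑ g ∈ S w n m F K p,
        ((msets m F K (w p)).filter (fun s => ¬ Ok w p (Function.update g p s))).card := by
    rw [h1, ← Finset.sum_add_distrib]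
    rw [Finset.sum_congr rfl h2, Finset.sum_const, smul_eq_mul, mul_comm]
  -- bound the bad sum,  per due length l
  have h4 : ∀ g ∈ S w n m F K p,
      (msets m F K (w p)).filter (fun s => ¬ Ok w p (Function.update g p s))
      ⊆ (Finset.Icc 1 p).biUnion (fun l => (msets m F K (w p)).filter
          (fun s => Due w p (p+1-2*l) l ∧
            ¬ breaks w (Function.update g p s) (p+1-2*l) l)) := by
    intro g _ s hs
    rcases mem_filter.mp hs with ⟨hsm, hnok⟩
    rw [Ok] at hnok
    push_neg at hnok
    rcases hnok with ⟨a, l, hdue, hnb⟩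
    have hl1 := hdue.1
    have hal := hdue.2.1
    have ha : a = p + 1 - 2*l := by omega
    have hlp : l ≤ p := by omega
    subst ha
    exact mem_biUnion.mpr ⟨l, Finset.mem_Icc.mpr ⟨hl1, hlp⟩, mem_filter.mpr ⟨hsm, hdue, hnb⟩⟩
  have h5 : (∑ g ∈ S w n m F K p,
      ((msets m F K (w p)).filter (fun s => ¬ Ok w p (Function.update g p s))).card)
      ≤ ∑ l ∈ Finset.Icc 1 p, ∑ g ∈ S w n m F K p,
        ((msets m F K (w p)).filter (fun s => Due w p (p+1-2*l) l ∧
          ¬ breaks w (Function.update g p s) (p+1-2*l) l)).card := by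
    rw [Finset.sum_comm]
    refine Finset.sum_le_sum (fun g hg => ?_)
    exact le_trans (card_le_card (h4 g hg)) Finset.card_biUnion_le
  -- per-l bound, in ℚ
  have h6 : ∀ l ∈ Finset.Icc 1 p,
      ((∑ g ∈ S w n m F K p,
        ((msets m F K (w p)).filter (fun s => Due w p (p+1-2*l) l ∧
          ¬ breaks w (Function.update g p s) (p+1-2*l) l)).card : ℕ) : ℚ)
      ≤ (B : ℚ) * ((1:ℚ)/2)^(l-1) * ((S w n m F K p).card : ℚ) := by
    intro l hl
    rcases Finset.mem_Icc.mp hl with ⟨hl1, hlp⟩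
    by_cases hdue : Due w p (p+1-2*l) l
    · -- the due case
      have hal : (p+1-2*l) + 2*l = p + 1 := by
        have := hdue.2.1; omega
      set a := p + 1 - 2*l with haa
      -- second-half freshness
      have hsf : ∀ r, a + l ≤ r → r ≤ p → fresh w r := by
        intro r hr1 hr2
        exact hdue.2.2.2 r hr1 (by omega)
      -- membership in the peel set for g with nonempty bad fiber
      set peelSet := (S w n m F K p).filter
        (fun g => ∀ k, k < l-1 → (g (fo w (a + k)) ∩ g (p - (l-1) + k)).Nonempty) with hpeel
      have hmem : ∀ g ∈ S w n m F K p,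
          ((msets m F K (w p)).filter (fun s => Due w p a l ∧
            ¬ breaks w (Function.update g p s) a l)).Nonempty → g ∈ peelSet := by
        intro g hg ⟨s, hs⟩
        rcases mem_filter.mp hs with ⟨hsm, _, hnb⟩
        rw [breaks] at hnb
        push_neg at hnb
        rw [hpeel, mem_filter]
        refine ⟨hg, fun k hk => ?_⟩
        have h := hnb k (by omega)
        have hfo1 : fo w (a + l + k) = a + l + k :=
          fo_eq_of_fresh w (hsf (a+l+k) (by omega) (by omega))
        rw [hfo1] at h
        rw [Function.update_of_ne (by have := fo_le w (a+k); omega)] at h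
        rw [Function.update_of_ne (by omega : a + l + k ≠ p)] at h
        rwa [show p - (l-1) + k = a + l + k by omega]
      -- bad fiber size at most B
      have hfiber : ∀ g ∈ S w n m F K p,
          ((msets m F K (w p)).filter (fun s => Due w p a l ∧
            ¬ breaks w (Function.update g p s) a l)).card ≤ B := by
        intro g hg
        have hsub : ((msets m F K (w p)).filter (fun s => Due w p a l ∧
            ¬ breaks w (Function.update g p s) a l))
            ⊆ (msets m F K (w p)).filter
              (fun s => ((g (fo w (a + l - 1))) ∩ s).Nonempty) := by
          intro s hs
          rcases mem_filter.mp hs with ⟨hsm, _, hnb⟩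
          rw [breaks] at hnb
          push_neg at hnb
          have h := hnb (l-1) (by omega)
          have hfo2 : fo w (a + l + (l-1)) = a + l + (l-1) :=
            fo_eq_of_fresh w (hsf (a+l+(l-1)) (by omega) (by omega))
          rw [hfo2, show a + l + (l-1) = p by omega, Function.update_self] at h
          rw [Function.update_of_ne (by have := fo_le w (a + (l-1)); omega)] at h
          rw [show a + (l-1) = a + l - 1 by omega] at h
          exact mem_filter.mpr ⟨hsm, h⟩
        refine le_trans (card_le_card hsub) ?_
        have hfo3 : fo w (a + l - 1) ≤ a + l - 1 := fo_le w (a + l - 1)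
        have hD : g (fo w (a + l - 1)) ∈ msets m F K (w (fo w (a + l - 1))) := by
          refine (S_mem_spec w n m F K p g hg).1 _ (by omega) (by omega) (fresh_fo w _)
        have hDcard : (g (fo w (a + l - 1))).card = m := (mem_powersetCard.mp hD).2
        have hcm := count_meet m (Kd F K (w p)) (g (fo w (a + l - 1)))
        rw [Kd_card F K (w p) (hK p hpn), hDcard] at hcm
        exact hcm
      -- sum over the peel set
      have hsum1 : (∑ g ∈ S w n m F K p,
          ((msets m F K (w p)).filter (fun s => Due w p a l ∧
            ¬ breaks w (Function.update g p s) a l)).card)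
          ≤ B * peelSet.card := by
        have hps : peelSet ⊆ S w n m F K p := filter_subset _ _
        rw [← Finset.sum_subset hps (fun g hg hgn => ?_)]
        · calc ∑ g ∈ peelSet, ((msets m F K (w p)).filter (fun s => Due w p a l ∧
              ¬ breaks w (Function.update g p s) a l)).card
              ≤ ∑ _g ∈ peelSet, B :=
                Finset.sum_le_sum (fun g hg => hfiber g (hps hg))
            _ = peelSet.card * B := by rw [Finset.sum_const, smul_eq_mul]
            _ = B * peelSet.card := by ring
        · by_contra hne
          exact hgn (hmem g hg (Finset.card_ne_zero.mp hne))
      -- peel bound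
      have hsum2 : peelSet.card ≤ B^(l-1) * (S w n m F K (p-(l-1))).card := by
        rw [hpeel]
        refine peel w n m F K hK (l-1) p (by omega)
          (fun q hq1 hq2 => ⟨by omega, hsf q (by omega) (by omega)⟩)
          (fun k => fo w (a + k)) (fun k hk => ?_)
        show fo w (a + k) < p - (l-1) ∧ fo w (a + k) < n ∧ fresh w (fo w (a + k))
        have hfle := fo_le w (a + k)
        exact ⟨by omega, by omega, fresh_fo w _⟩
      -- chain bound
      have hchain : A^(l-1) * (S w n m F K (p-(l-1))).card
          ≤ 2^(l-1) * (S w n m F K p).card :=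
        chain (l-1) (by omega) (fun q hq1 hq2 => hsf q (by omega) (by omega))
      -- combine in ℚ
      have hq1 : ((∑ g ∈ S w n m F K p,
          ((msets m F K (w p)).filter (fun s => Due w p a l ∧
            ¬ breaks w (Function.update g p s) a l)).card : ℕ) : ℚ)
          ≤ (B:ℚ) * ((B:ℚ)^(l-1) * ((S w n m F K (p-(l-1))).card : ℚ)) := by
        have : (∑ g ∈ S w n m F K p,
            ((msets m F K (w p)).filter (fun s => Due w p a l ∧
              ¬ breaks w (Function.update g p s) a l)).card)
            ≤ B * (B^(l-1) * (S w n m F K (p-(l-1))).card) :=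
          le_trans hsum1 (Nat.mul_le_mul_left _ hsum2)
        exact_mod_cast this
      refine le_trans hq1 ?_
      rw [mul_assoc]
      refine mul_le_mul_of_nonneg_left ?_ (Nat.cast_nonneg _)
      -- B^(l-1) * S(p-(l-1)) ≤ (1/2)^(l-1) * S p  in ℚ
      have h4pow : ((4:ℚ) * B)^(l-1) * ((S w n m F K (p-(l-1))).card : ℚ)
          ≤ (A:ℚ)^(l-1) * ((S w n m F K (p-(l-1))).card : ℚ) := by
        refine mul_le_mul_of_nonneg_right (pow_le_pow_left₀ (by positivity) ?_ _)
          (Nat.cast_nonneg _)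
        exact_mod_cast hBA
      have hchainq : ((A:ℚ))^(l-1) * ((S w n m F K (p-(l-1))).card : ℚ)
          ≤ (2:ℚ)^(l-1) * ((S w n m F K p).card : ℚ) := by exact_mod_cast hchain
      have h4pos : (0:ℚ) < (4:ℚ)^(l-1) := by positivity
      rw [show ((4:ℚ) * B)^(l-1) = (4:ℚ)^(l-1) * (B:ℚ)^(l-1) by rw [mul_pow]] at h4pow
      have hkey : (4:ℚ)^(l-1) * ((B:ℚ)^(l-1) * ((S w n m F K (p-(l-1))).card : ℚ))
          ≤ (2:ℚ)^(l-1) * ((S w n m F K p).card : ℚ) := by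
        calc (4:ℚ)^(l-1) * ((B:ℚ)^(l-1) * ((S w n m F K (p-(l-1))).card : ℚ))
            = (4:ℚ)^(l-1) * (B:ℚ)^(l-1) * ((S w n m F K (p-(l-1))).card : ℚ) := by ring
          _ ≤ (A:ℚ)^(l-1) * ((S w n m F K (p-(l-1))).card : ℚ) := h4pow
          _ ≤ (2:ℚ)^(l-1) * ((S w n m F K p).card : ℚ) := hchainq
      have h24 : ((1:ℚ)/2)^(l-1) = (2:ℚ)^(l-1) / (4:ℚ)^(l-1) := by
        rw [← div_pow]; norm_num
      rw [h24, div_mul_eq_mul_div, le_div_iff₀ h4pos]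
      calc (B:ℚ)^(l-1) * ((S w n m F K (p-(l-1))).card : ℚ) * (4:ℚ)^(l-1)
          = (4:ℚ)^(l-1) * ((B:ℚ)^(l-1) * ((S w n m F K (p-(l-1))).card : ℚ)) := by ring
        _ ≤ (2:ℚ)^(l-1) * ((S w n m F K p).card : ℚ) := hkey
    · -- not due: the fibers are empty
      have : ∀ g ∈ S w n m F K p,
          ((msets m F K (w p)).filter (fun s => Due w p (p+1-2*l) l ∧
            ¬ breaks w (Function.update g p s) (p+1-2*l) l)) = ∅ := by
        intro g _
        apply Finset.filter_eq_empty_iff.mpr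
        intro s _ hcontra
        exact hdue hcontra.1
      rw [Finset.sum_congr rfl (fun g hg => by rw [this g hg, Finset.card_empty])]
      rw [Finset.sum_const, smul_eq_mul, Nat.mul_zero]
      rw [Nat.cast_zero]
      exact mul_nonneg (mul_nonneg (Nat.cast_nonneg _) (by positivity)) (Nat.cast_nonneg _)
  -- total bad bound in ℚ
  have h8 : ((∑ g ∈ S w n m F K p,
      ((msets m F K (w p)).filter (fun s => ¬ Ok w p (Function.update g p s))).card : ℕ) : ℚ)
      ≤ 2 * (B:ℚ) * ((S w n m F K p).card : ℚ) := by
    have hc5 : ((∑ g ∈ S w n m F K p,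
        ((msets m F K (w p)).filter (fun s => ¬ Ok w p (Function.update g p s))).card : ℕ) : ℚ)
        ≤ ((∑ l ∈ Finset.Icc 1 p, ∑ g ∈ S w n m F K p,
          ((msets m F K (w p)).filter (fun s => Due w p (p+1-2*l) l ∧
            ¬ breaks w (Function.update g p s) (p+1-2*l) l)).card : ℕ) : ℚ) := by
      exact_mod_cast h5
    refine le_trans hc5 ?_
    rw [Nat.cast_sum]
    calc ∑ l ∈ Finset.Icc 1 p, ((∑ g ∈ S w n m F K p,
          ((msets m F K (w p)).filter (fun s => Due w p (p+1-2*l) l ∧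
            ¬ breaks w (Function.update g p s) (p+1-2*l) l)).card : ℕ) : ℚ)
        ≤ ∑ l ∈ Finset.Icc 1 p, (B : ℚ) * ((1:ℚ)/2)^(l-1) * ((S w n m F K p).card : ℚ) :=
          Finset.sum_le_sum h6
      _ = (B:ℚ) * ((S w n m F K p).card : ℚ) * (∑ l ∈ Finset.Icc 1 p, ((1:ℚ)/2)^(l-1)) := by
          rw [Finset.mul_sum]
          refine Finset.sum_congr rfl (fun l _ => by ring)
      _ ≤ (B:ℚ) * ((S w n m F K p).card : ℚ) * 2 := by
          refine mul_le_mul_of_nonneg_left (half_geo_sum p)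
            (mul_nonneg (Nat.cast_nonneg _) (Nat.cast_nonneg _))
      _ = 2 * (B:ℚ) * ((S w n m F K p).card : ℚ) := by ring
  -- conclude
  have h9 : 2 * (∑ g ∈ S w n m F K p,
      ((msets m F K (w p)).filter (fun s => ¬ Ok w p (Function.update g p s))).card)
      ≤ A * (S w n m F K p).card := by
    have : (2:ℚ) * ((∑ g ∈ S w n m F K p,
        ((msets m F K (w p)).filter (fun s => ¬ Ok w p (Function.update g p s))).card : ℕ) : ℚ)
        ≤ (A:ℚ) * ((S w n m F K p).card : ℚ) := by
      calc (2:ℚ) * ((∑ g ∈ S w n m F K p,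
            ((msets m F K (w p)).filter (fun s => ¬ Ok w p (Function.update g p s))).card : ℕ) : ℚ)
          ≤ 2 * (2 * (B:ℚ) * ((S w n m F K p).card : ℚ)) := by linarith [h8]
        _ = (4 * (B:ℚ)) * ((S w n m F K p).card : ℚ) := by ring
        _ ≤ (A:ℚ) * ((S w n m F K p).card : ℚ) := by
            refine mul_le_mul_of_nonneg_right ?_ (Nat.cast_nonneg _)
            exact_mod_cast hBA
    exact_mod_cast this
  have hfin := h3
  generalize hx : A * (S w n m F K p).card = x at hfin h9 ⊢
  omega

lemma S_nonempty (hm : 1 ≤ m) (hF : 4 * m^2 ≤ F)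
    (hK : ∀ i, i < n → F ≤ (K (w i)).card) :
    ∀ p, (S w n m F K p).Nonempty := by
  intro p
  induction p with
  | zero =>
      rw [S_zero]
      exact ⟨_, mem_singleton_self _⟩
  | succ p IH =>
      by_cases hc : p < n ∧ fresh w p
      · have hg := growth w n m F K hm hF hK p hc.1 hc.2
        have hApos : 0 < Nat.choose F m := Nat.choose_pos (by nlinarith)
        have hcard : 0 < (S w n m F K p).card := Finset.card_pos.mpr IH
        have : 0 < (S w n m F K (p+1)).card := by nlinarith
        exact Finset.card_pos.mp this
      · rw [S_succ, Sstep, if_neg hc]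
        exact IH

lemma S_final : ∀ p, ∀ g ∈ S w n m F K p, ∀ a l, 1 ≤ l → a + 2*l ≤ p → a + 2*l ≤ n →
    (∀ r s, a ≤ r → r < s → s < a + 2*l → w r ≠ w s) →
    (∀ r, a + l ≤ r → r < a + 2*l → fresh w r) →
    breaks w g a l := by
  intro p
  induction p with
  | zero =>
      intro g _ a l hl hp _ _ _
      omega
  | succ p IH =>
      intro g hg a l hl hp hn2 hdist hfr
      rw [S_succ, Sstep] at hg
      by_cases hc : p < n ∧ fresh w p
      · rw [if_pos hc] at hg
        rcases mem_biUnion.mp hg with ⟨g₀, hg₀, hgi⟩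
        rcases mem_image.mp hgi with ⟨s, hs, rfl⟩
        rcases Nat.lt_or_ge (a + 2*l) (p+1) with hlt | hge
        · -- old event, transfer along the update
          have hb := IH g₀ hg₀ a l hl (by omega) hn2 hdist hfr
          rcases hb with ⟨k, hk, he⟩
          refine ⟨k, hk, ?_⟩
          have h1 : fo w (a + k) ≠ p := by have := fo_le w (a + k); omega
          have h2 : fo w (a + l + k) ≠ p := by have := fo_le w (a + l + k); omega
          rwa [Function.update_of_ne h1, Function.update_of_ne h2]
        · -- the event is due exactly now
          have hOk : Ok w p (Function.update g₀ p s) := (mem_filter.mp hs).2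
          exact hOk a l ⟨hl, by omega, hdist, hfr⟩
      · rw [if_neg hc] at hg
        rcases Nat.lt_or_ge (a + 2*l) (p+1) with hlt | hge
        · exact IH g hg a l hl (by omega) hn2 hdist hfr
        · exfalso
          apply hc
          have hp' : p = a + 2*l - 1 := by omega
          refine ⟨by omega, ?_⟩
          have := hfr p (by omega) (by omega)
          exact this

theorem pass (hm : 1 ≤ m) (hF : 4 * m^2 ≤ F)
    (hK : ∀ i, i < n → F ≤ (K (w i)).card) :
    ∃ M : V → Finset C,
      (∀ i, i < n → M (w i) ⊆ K (w i) ∧ (M (w i)).card = m) ∧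
      (∀ a l, 1 ≤ l → a + 2*l ≤ n →
        (∀ r s, a ≤ r → r < s → s < a + 2*l → w r ≠ w s) →
        (∀ r, a + l ≤ r → r < a + 2*l → ∀ q, q < r → w q ≠ w r) →
        ∃ k, k < l ∧ M (w (a+k)) ∩ M (w (a+l+k)) = ∅) := by
  obtain ⟨g, hg⟩ := S_nonempty w n m F K hm hF hK n
  refine ⟨fun v => if h : ∃ q, w q = v then g (fo w h.choose) else ∅, ?_, ?_⟩
  all_goals {
    have hMw : ∀ r : ℕ, (fun v => if h : ∃ q, w q = v then g (fo w h.choose) else ∅) (w r)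
        = g (fo w r) := by
      intro r
      have hex : ∃ q, w q = w r := ⟨r, rfl⟩
      simp only [dif_pos hex]
      congr 1
      exact fo_congr w hex.choose_spec
    first
    | { -- part 1
        intro i hi
        rw [hMw i]
        have h1 : fo w i < n := lt_of_le_of_lt (fo_le w i) hi
        have h2 : g (fo w i) ∈ msets m F K (w (fo w i)) :=
          (S_mem_spec w n m F K n g hg).1 _ h1 h1 (fresh_fo w i)
        rw [w_fo w i] at h2
        rcases mem_powersetCard.mp h2 with ⟨hsub, hcard⟩
        exact ⟨subset_trans hsub (Kd_subset F K (w i)), hcard⟩ }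
    | { -- part 2
        intro a l hl hn2 hdist hfr
        have hb := S_final w n m F K n g hg a l hl hn2 hn2 hdist
          (fun r h1 h2 => hfr r h1 h2)
        rcases hb with ⟨k, hk, he⟩
        refine ⟨k, hk, ?_⟩
        rw [hMw (a+k), hMw (a+l+k)]
        exact he }
  }

end Pass

lemma f5_ge (x : ℕ) (hx : 1 ≤ x) : 4 * x^2 ≤ f5 x := by
  have h1 : x ≤ f4 x := by unfold f4 f3; omega
  have h2 : x^3 ≤ (f4 x)^3 := Nat.pow_le_pow_left h1 3
  have h4 : 4*x^2 * 1 ≤ 4*x^2*(8*x) := Nat.mul_le_mul_left _ (by omega)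
  have h5 : 4*x^2*(8*x) = 32*x^3 := by ring
  unfold f5 f3
  omega

lemma f5_pos (x : ℕ) : 1 ≤ f5 x := by unfold f5 f3; omega

end

end WFL

/-- Walk Filtering Lemma (laminar form): let `W = (w 0, …, w (n-1))` be a walk on a
vertex set `V` whose repeated occurrences have laminar structure (no positions
`i < a < j < b` with `w i = w j`, `w a = w b` and `w i ≠ w a`), and let `L` be a proper
list assignment of `W` (consecutive vertices of `W` have disjoint lists) with at least
`f₆(m)` colors on each vertex occurring in `W`. Then there is `M` with `M v ⊆ L v` and
`|M v| ≥ m` for every vertex occurring in `W`, such that for every simple `W`-block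
`(w i, …, w j)` and every coloring `c` with `c v ∈ M v` for all vertices of `W`, the
sequence `(c (w i), …, c (w j))` is non-repetitive. -/
theorem walk_filtering_lemma {V C : Type*} (m n : ℕ) (hm : 1 ≤ m) (w : Fin n → V)
    (laminar : ¬ ∃ i a j b : Fin n, i < a ∧ a < j ∧ j < b ∧
      w i = w j ∧ w a = w b ∧ w i ≠ w a)
    (L : V → Finset C)
    (hproper : ∀ (i : ℕ) (h : i + 1 < n),
      Disjoint (L (w ⟨i, by omega⟩)) (L (w ⟨i + 1, h⟩)))
    (hcard : ∀ i : Fin n, f6 m ≤ (L (w i)).card) :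
    ∃ M : V → Finset C,
      (∀ i : Fin n, M (w i) ⊆ L (w i) ∧ m ≤ (M (w i)).card) ∧
      (∀ (i j : ℕ) (hij : i ≤ j) (hj : j < n),
        (∀ a b : ℕ, (ha : i ≤ a) → (hab : a < b) → (hb : b ≤ j) →
          w ⟨a, by omega⟩ ≠ w ⟨b, by omega⟩) →
        ∀ c : V → C, (∀ t : Fin n, c (w t) ∈ M (w t)) →
          ∀ (a l : ℕ), (hia : i ≤ a) → (hl : 1 ≤ l) → (hal : a + 2 * l ≤ j + 1) →
            ¬ ∀ k : ℕ, (hk : k < l) →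
              c (w ⟨a + k, by omega⟩) = c (w ⟨a + l + k, by omega⟩)) := by
  classical
  rcases Nat.eq_zero_or_pos n with hn0 | hn
  · subst hn0
    exact ⟨fun _ => ∅, fun i => i.elim0, fun i j hij hj => by omega⟩
  · set W : ℕ → V := fun p => w ⟨p % n, Nat.mod_lt _ hn⟩ with hWdef
    have hWeq : ∀ (p : ℕ) (hp : p < n), W p = w ⟨p, hp⟩ := by
      intro p hp
      have h2 : p % n = p := Nat.mod_eq_of_lt hp
      simp only [hWdef]
      congr 1
      exact Fin.ext h2
    have hm1 : 1 ≤ f5 m := WFL.f5_pos m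
    have hF2 : 4 * m^2 ≤ f5 m := WFL.f5_ge m hm
    have hF1 : 4 * (f5 m)^2 ≤ f6 m := WFL.f5_ge (f5 m) hm1
    -- pass 1: the reversed walk, producing intermediate sets of size f5 m
    obtain ⟨M1, hM1a, hM1b⟩ := WFL.pass (fun t => W (n - 1 - t)) n (f5 m) (f6 m) L hm1 hF1
      (by
        intro p hp
        have h2 : n - 1 - p < n := by omega
        show f6 m ≤ (L (W (n - 1 - p))).card
        rw [hWeq _ h2]
        exact hcard _)
    have hM1a' : ∀ p, p < n → M1 (W (n - 1 - p)) ⊆ L (W (n - 1 - p)) ∧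
        (M1 (W (n - 1 - p))).card = f5 m := fun p hp => hM1a p hp
    have hM1L : ∀ p, p < n → M1 (W p) ⊆ L (W p) ∧ (M1 (W p)).card = f5 m := by
      intro p hp
      have h3 : n - 1 - (n - 1 - p) = p := by omega
      have := hM1a' (n - 1 - p) (by omega)
      rwa [h3] at this
    -- pass 2: the walk itself, within the sets produced by pass 1
    obtain ⟨M2, hM2a, hM2b⟩ := WFL.pass W n m (f5 m) M1 hm hF2
      (by
        intro p hp
        exact le_of_eq (hM1L p hp).2.symm)
    refine ⟨M2, ?_, ?_⟩
    · intro i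
      have hiv : (i : ℕ) < n := i.2
      have e1 : W i = w i := by
        rw [hWeq _ hiv]
      have h2 := hM2a i hiv
      have h1 := hM1L i hiv
      rw [e1] at h2 h1
      exact ⟨h2.1.trans h1.1, le_of_eq h2.2.symm⟩
    · intro i j hij hj hdist c hc a l hia hl hal hrep
      have hWd : ∀ x y, i ≤ x → x < y → y ≤ j → W x ≠ W y := by
        intro x y hx hxy hy
        have hxn : x < n := by omega
        have hyn : y < n := by omega
        rw [hWeq x hxn, hWeq y hyn]
        exact hdist x y hx hxy hy
      have hcW : ∀ t, t < n → c (W t) ∈ M2 (W t) := by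
        intro t ht
        rw [hWeq t ht]
        exact hc ⟨t, ht⟩
      have hrepW : ∀ k, k < l → c (W (a + k)) = c (W (a + l + k)) := by
        intro k hk
        have h1 : a + k < n := by omega
        have h2 : a + l + k < n := by omega
        rw [hWeq _ h1, hWeq _ h2]
        exact hrep k hk
      by_cases hA : ∀ r, a + l ≤ r → r < a + 2*l → ∀ q, q < r → W q ≠ W r
      · -- second half consists of first occurrences: pass 2 applies
        obtain ⟨k, hk, hdisj⟩ := hM2b a l hl (by omega)
          (fun r s h1 h2 h3 => hWd r s (by omega) h2 (by omega)) hA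
        have hx1 : c (W (a+k)) ∈ M2 (W (a+k)) := hcW _ (by omega)
        have hx2 : c (W (a+l+k)) ∈ M2 (W (a+l+k)) := hcW _ (by omega)
        rw [hrepW k hk] at hx1
        have hmem : c (W (a+l+k)) ∈ M2 (W (a+k)) ∩ M2 (W (a+l+k)) :=
          Finset.mem_inter.mpr ⟨hx1, hx2⟩
        rw [hdisj] at hmem
        exact absurd hmem (Finset.notMem_empty _)
      · -- some vertex of the second half is old; laminarity forces the first half
        -- to consist of last occurrences, so pass 1 (reversed walk) applies
        push_neg at hA
        obtain ⟨r', hr1, hr2, q, hq, hqe⟩ := hA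
        have hqi : q < i := by
          by_contra hge
          push_neg at hge
          exact hWd q r' hge hq (by omega) hqe
        have hfinal : ∀ r, a ≤ r → r < a + l → ∀ s, r < s → s < n → W s ≠ W r := by
          intro r hra hrl s hrs hsn heq
          rcases Nat.lt_or_ge j s with hjs | hsj
          · refine laminar ⟨⟨q, by omega⟩, ⟨r, by omega⟩, ⟨r', by omega⟩, ⟨s, hsn⟩,
              ?_, ?_, ?_, ?_, ?_, ?_⟩
            · exact Fin.mk_lt_mk.mpr (by omega)
            · exact Fin.mk_lt_mk.mpr (by omega)
            · exact Fin.mk_lt_mk.mpr (by omega)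
            · rw [← hWeq q (by omega), ← hWeq r' (by omega)]
              exact hqe
            · rw [← hWeq r (by omega), ← hWeq s hsn]
              exact heq.symm
            · rw [← hWeq q (by omega), ← hWeq r (by omega)]
              intro hqr
              exact hWd r r' (by omega) (by omega) (by omega) (hqr.symm.trans hqe)
          · exact hWd r s (by omega) hrs hsj heq.symm
        obtain ⟨k, hk, hdisj⟩ := hM1b (n - a - 2*l) l hl (by omega)
          (by
            intro r s h1 h2 h3
            show W (n - 1 - r) ≠ W (n - 1 - s)
            exact (hWd (n-1-s) (n-1-r) (by omega) (by omega) (by omega)).symm)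
          (by
            intro r h1 h2 q' hq'
            show W (n - 1 - q') ≠ W (n - 1 - r)
            exact hfinal (n-1-r) (by omega) (by omega) (n-1-q') (by omega) (by omega))
        set k' := l - 1 - k with hk'def
        have hk' : k' < l := by omega
        have e1 : n - 1 - ((n - a - 2*l) + k) = a + l + k' := by omega
        have e2 : n - 1 - ((n - a - 2*l) + l + k) = a + k' := by omega
        have hdisj' : M1 (W (a + l + k')) ∩ M1 (W (a + k')) = ∅ := by
          rw [← e1, ← e2]
          exact hdisj
        have hs1 : c (W (a+k')) ∈ M2 (W (a+k')) := hcW _ (by omega)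
        have hs2 : c (W (a+l+k')) ∈ M2 (W (a+l+k')) := hcW _ (by omega)
        have hsub1 : M2 (W (a+k')) ⊆ M1 (W (a+k')) := (hM2a _ (by omega)).1
        have hsub2 : M2 (W (a+l+k')) ⊆ M1 (W (a+l+k')) := (hM2a _ (by omega)).1
        rw [hrepW k' hk'] at hs1
        have hmem : c (W (a+l+k')) ∈ M1 (W (a+l+k')) ∩ M1 (W (a+k')) :=
          Finset.mem_inter.mpr ⟨hsub2 hs2, hsub1 hs1⟩
        rw [hdisj'] at hmem
        exact absurd hmem (Finset.notMem_empty _)
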